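/- Let (x̄,λ̄) be a KKT point of the unperturbed problem (a,b)=(0,0) with M(x̄,0,0) ≠ {λ̄}. Then S_KKT is strongly calm at the origin for (x̄,λ̄) if and only if X_KKT has the pseudo-isolated calmness at the origin for x̄ (relative to λ̄) and the multiplier set map M is calm at (x̄,0,0) for λ̄. -/
import Mathlib


open Set Filter Topology Metric Pointwise
open scoped RealInnerProductSpace Classical

noncomputable section

/-- The normal cone of convex analysis: `N_K(z) = {l | ⟪l, y - z⟫ ≤ 0 ∀ y ∈ K}`,
empty when `z ∉ K`. -/
def nCone {E : Type*} [NormedAddCommGroup E] [InnerProductSpace ℝ E]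
    (K : Set E) (z : E) : Set E :=
  {l | z ∈ K ∧ ∀ y ∈ K, ⟪l, y - z⟫ ≤ 0}

/-- The metric projection onto `K`: under the standing assumptions (`K` nonempty,
closed and convex in a finite-dimensional space) the distance minimizer exists and
is unique, so this choice-based definition is exactly the metric projection `Π_K`. -/

def projK {E : Type*} [NormedAddCommGroup E] [InnerProductSpace ℝ E]
    (K : Set E) (z : E) : E :=
  if h : ∃ p, p ∈ K ∧ ∀ y ∈ K, ‖z - p‖ ≤ ‖z - y‖ then h.choose else 0

/-- A set `D` is a pointed closed convex cone. -/
def PointedClosedConvexCone {E : Type*} [NormedAddCommGroup E] [NormedSpace ℝ E]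
    (D : Set E) : Prop :=
  IsClosed D ∧ Convex ℝ D ∧ (∀ t : ℝ, 0 ≤ t → ∀ z ∈ D, t • z ∈ D) ∧ D ∩ (-D) ⊆ {0}

/-- `K` is `C²`-cone reducible at `y`: near `y`, `K` is the inverse image of a pointed
closed convex cone `D` under a twice continuously differentiable map `Ξ` with `Ξ y = 0`
and `Ξ'(y)` surjective.  (Since the target of the reduction is a finite-dimensional
space of dimension at most `dim Y`, it can be taken to be a Euclidean space.) -/
def C2ConeReducibleAt {Y : Type*} [NormedAddCommGroup Y] [InnerProductSpace ℝ Y]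
    (K : Set Y) (y : Y) : Prop :=
  ∃ (m : ℕ) (U : Set Y) (D : Set (EuclideanSpace ℝ (Fin m)))
    (Ξ : Y → EuclideanSpace ℝ (Fin m)),
      IsOpen U ∧ y ∈ U ∧ PointedClosedConvexCone D ∧ ContDiffOn ℝ 2 Ξ U ∧
      Ξ y = 0 ∧ Function.Surjective (fderiv ℝ Ξ y) ∧ K ∩ U = {y' ∈ U | Ξ y' ∈ D}

/-- `K` is `C²`-cone reducible (at every point of `K`). -/
def C2ConeReducible {Y : Type*} [NormedAddCommGroup Y] [InnerProductSpace ℝ Y]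
    (K : Set Y) : Prop :=
  ∀ y ∈ K, C2ConeReducibleAt K y

/-- Calmness of a set-valued map `F` at `z0` for `w0 ∈ F z0`. -/
def Calm {Z W : Type*} [NormedAddCommGroup Z] [NormedAddCommGroup W]
    (F : Z → Set W) (z0 : Z) (w0 : W) : Prop :=
  ∃ κ ε δ : ℝ, 0 < κ ∧ 0 < ε ∧ 0 < δ ∧
    ∀ z : Z, ‖z - z0‖ ≤ ε → ∀ w ∈ F z, ‖w - w0‖ ≤ δ →
      ∃ w' ∈ F z0, ‖w - w'‖ ≤ κ * ‖z - z0‖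

/-- Isolated calmness of a set-valued map `F` at `z0` for `w0 ∈ F z0`. -/
def IsolatedCalm {Z W : Type*} [NormedAddCommGroup Z] [NormedAddCommGroup W]
    (F : Z → Set W) (z0 : Z) (w0 : W) : Prop :=
  ∃ κ ε δ : ℝ, 0 < κ ∧ 0 < ε ∧ 0 < δ ∧
    ∀ z : Z, ‖z - z0‖ ≤ ε → ∀ w ∈ F z, ‖w - w0‖ ≤ δ →
      ‖w - w0‖ ≤ κ * ‖z - z0‖

/-- Metric subregularity of `F` at `z0` for `w0 ∈ F z0`:
`dist(z, F⁻¹(w0)) ≤ κ · dist(w0, F z ∩ B_δ(w0))` for `z` near `z0`; since the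
right-hand side is an infimum over `F z ∩ B_δ(w0)` (`= +∞` when empty), this is
equivalently stated pointwise. -/
def MetricallySubregular {Z W : Type*} [NormedAddCommGroup Z] [NormedAddCommGroup W]
    (F : Z → Set W) (z0 : Z) (w0 : W) : Prop :=
  ∃ κ ε δ : ℝ, 0 < κ ∧ 0 < ε ∧ 0 < δ ∧
    ∀ z : Z, ‖z - z0‖ ≤ ε → ∀ w ∈ F z, ‖w - w0‖ ≤ δ →
      infDist z {z' : Z | w0 ∈ F z'} ≤ κ * ‖w0 - w‖

/-- `φ` has directional derivative `w` at `z` in direction `h`. -/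
def HasDirDeriv {E : Type*} [NormedAddCommGroup E] [NormedSpace ℝ E]
    (φ : E → E) (z h w : E) : Prop :=
  Tendsto (fun t : ℝ => t⁻¹ • (φ (z + t • h) - φ z)) (𝓝[>] (0 : ℝ)) (𝓝 w)

/-- The contingent (Bouligand) tangent cone to `s` at `z`. -/
def contCone {E : Type*} [NormedAddCommGroup E] [NormedSpace ℝ E]
    (s : Set E) (z : E) : Set E :=
  {w | ∃ (t : ℕ → ℝ) (v : ℕ → E), (∀ n, 0 < t n) ∧ Tendsto t atTop (𝓝 0) ∧
        Tendsto v atTop (𝓝 w) ∧ ∀ n, z + t n • v n ∈ s}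

/-- The negative polar cone of a set. -/
def negPolar {E : Type*} [NormedAddCommGroup E] [InnerProductSpace ℝ E]
    (C : Set E) : Set E :=
  {z | ∀ d ∈ C, ⟪z, d⟫ ≤ 0}

/-- The critical cone `C_K(y,u) = T_K(y) ∩ u^⊥`. -/
def criticalCone {E : Type*} [NormedAddCommGroup E] [InnerProductSpace ℝ E]
    (K : Set E) (y u : E) : Set E :=
  contCone K y ∩ {d | ⟪u, d⟫ = 0}

/-- The (outer) second-order tangent set `T²_K(y,h)`. -/
def secondOrderTangent {E : Type*} [NormedAddCommGroup E] [NormedSpace ℝ E]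
    (K : Set E) (y h : E) : Set E :=
  {w | ∃ (t : ℕ → ℝ) (v : ℕ → E), (∀ n, 0 < t n) ∧ Tendsto t atTop (𝓝 0) ∧
        Tendsto v atTop (𝓝 w) ∧ ∀ n, y + t n • h + ((t n) ^ 2 / 2) • v n ∈ K}

variable {X Y : Type*} [NormedAddCommGroup X] [InnerProductSpace ℝ X]
  [FiniteDimensional ℝ X] [NormedAddCommGroup Y] [InnerProductSpace ℝ Y]
  [FiniteDimensional ℝ Y]

/-- The KKT solution map of the canonically perturbed problem:
`∇f(x) + ∇g(x)*λ = a` and `λ ∈ N_K(g(x) − b)`. -/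
def sKKT (f : X → ℝ) (g : X → Y) (K : Set Y) (a : X) (b : Y) : Set (X × Y) :=
  {p | gradient f p.1 + ContinuousLinearMap.adjoint (fderiv ℝ g p.1) p.2 = a ∧
       p.2 ∈ nCone K (g p.1 - b)}

/-- The multiplier set map `M(x,a,b)`. -/
def mSet (f : X → ℝ) (g : X → Y) (K : Set Y) (x : X) (a : X) (b : Y) : Set Y :=
  {l | (x, l) ∈ sKKT f g K a b}

/-- The stationary point map `X_KKT(a,b)`. -/
def xKKT (f : X → ℝ) (g : X → Y) (K : Set Y) (a : X) (b : Y) : Set X :=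
  {x | ∃ l, (x, l) ∈ sKKT f g K a b}

/-- The Hessian `∇²ₓₓL(x,λ)` of the Lagrangian `L(·,λ)` at `x`. -/
def hessLxx (f : X → ℝ) (g : X → Y) (x : X) (l : Y) : X →L[ℝ] X :=
  fderiv ℝ (fun u => gradient (fun v => f v + ⟪l, g v⟫) u) x

/-- The multiplier `l0` is noncritical: the only solutions `(ξ,v)` of
`∇²ₓₓL(x̄,λ̄)ξ + ∇g(x̄)*v = 0`, `g'(x̄)ξ − Π_K'(g(x̄)+λ̄; g'(x̄)ξ+v) = 0` have `ξ = 0`. -/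
def Noncritical (f : X → ℝ) (g : X → Y) (K : Set Y) (x0 : X) (l0 : Y) : Prop :=
  ∀ (ξ : X) (v : Y),
    hessLxx f g x0 l0 ξ + ContinuousLinearMap.adjoint (fderiv ℝ g x0) v = 0 →
    HasDirDeriv (projK K) (g x0 + l0) (fderiv ℝ g x0 ξ + v) (fderiv ℝ g x0 ξ) →
    ξ = 0

/-- Strong calmness of `S_KKT` at the origin for `(x̄,λ̄)`. -/
def StrongCalm (f : X → ℝ) (g : X → Y) (K : Set Y) (x0 : X) (l0 : Y) : Prop :=
  ∃ δ ε κ : ℝ, 0 < δ ∧ 0 < ε ∧ 0 < κ ∧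
    ∀ (a : X) (b : Y), ‖(a, b)‖ ≤ δ →
      ∀ (x : X) (l : Y), (x, l) ∈ sKKT f g K a b → ‖(x, l) - (x0, l0)‖ ≤ ε →
        ‖x - x0‖ + infDist l (mSet f g K x0 0 0) ≤ κ * ‖(a, b)‖

/-- Pseudo-isolated calmness of `X_KKT` at the origin for `x̄` (relative to `λ̄`). -/
def PseudoIsolatedCalm (f : X → ℝ) (g : X → Y) (K : Set Y) (x0 : X) (l0 : Y) : Prop :=
  ∃ ε δ κ : ℝ, 0 < ε ∧ 0 < δ ∧ 0 < κ ∧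
    ∀ (a : X) (b : Y), ‖(a, b)‖ ≤ δ →
      ∀ (x : X) (l : Y), (x, l) ∈ sKKT f g K a b → ‖(x, l) - (x0, l0)‖ ≤ ε →
        ‖x - x0‖ ≤ κ * ‖(a, b)‖

/-- Theorem 3.2: for a KKT point `(x̄,λ̄)` with `M(x̄,0,0) ≠ {λ̄}`,
`S_KKT` is strongly calm at the origin for `(x̄,λ̄)` iff `X_KKT` has the pseudo-isolated
calmness at the origin for `x̄` (relative to `λ̄`) and `M` is calm at `(x̄,0,0)` for `λ̄`. -/
theorem stmt_9 (f : X → ℝ) (g : X → Y) (K : Set Y)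
    (hf : ContDiff ℝ 2 f) (hg : ContDiff ℝ 2 g)
    (hKne : K.Nonempty) (hKcl : IsClosed K) (hKcv : Convex ℝ K)
    (hKred : C2ConeReducible K)
    (x0 : X) (l0 : Y) (hKKT : (x0, l0) ∈ sKKT f g K 0 0)
    (hMne : mSet f g K x0 0 0 ≠ {l0}) :
    StrongCalm f g K x0 l0
    ↔ (PseudoIsolatedCalm f g K x0 l0 ∧
       Calm (fun q : X × X × Y => mSet f g K q.1 q.2.1 q.2.2) (x0, 0, 0) l0) := by
  constructor
  · -- Strong calmness implies both properties
    rintro ⟨δS, εS, κS, hδS, hεS, hκS, hS⟩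
    constructor
    · exact ⟨εS, δS, κS, hεS, hδS, hκS, fun a b hab x l hxl hx =>
        le_trans (le_add_of_nonneg_right infDist_nonneg) (hS a b hab x l hxl hx)⟩
    · refine ⟨κS + 1, min εS δS, εS, by positivity, lt_min hεS hδS, hεS, ?_⟩
      rintro ⟨x, a, b⟩ hq l hl hld
      have hqnorm : ‖((x, a, b) : X × X × Y) - (x0, 0, 0)‖
          = max ‖x - x0‖ ‖((a, b) : X × Y)‖ := by
        simp [Prod.norm_def]
      have habq : ‖((a, b) : X × Y)‖ ≤ ‖((x, a, b) : X × X × Y) - (x0, 0, 0)‖ := by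
        rw [hqnorm]; exact le_max_right _ _
      have hxq : ‖x - x0‖ ≤ ‖((x, a, b) : X × X × Y) - (x0, 0, 0)‖ := by
        rw [hqnorm]; exact le_max_left _ _
      have habδ : ‖((a, b) : X × Y)‖ ≤ δS :=
        le_trans habq (le_trans hq (min_le_right _ _))
      have hxlε : ‖((x, l) : X × Y) - (x0, l0)‖ ≤ εS := by
        rw [Prod.norm_def]
        exact max_le (le_trans hxq (le_trans hq (min_le_left _ _))) hld
      have hmain := hS a b habδ x l hl hxlε
      have hinf : infDist l (mSet f g K x0 0 0) ≤ κS * ‖((a, b) : X × Y)‖ :=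
        le_trans (le_add_of_nonneg_left (norm_nonneg _)) hmain
      rcases eq_or_lt_of_le (norm_nonneg (((x, a, b) : X × X × Y) - (x0, 0, 0)))
        with h0 | h0
      · -- q = q0
        have hq0 : ((x, a, b) : X × X × Y) = (x0, 0, 0) := by
          have := norm_eq_zero.mp h0.symm
          exact sub_eq_zero.mp this
        have hx0 : x = x0 := congrArg Prod.fst hq0
        have ha0 : a = 0 := congrArg (Prod.fst ∘ Prod.snd) hq0
        have hb0 : b = 0 := congrArg (Prod.snd ∘ Prod.snd) hq0
        subst hx0 ha0 hb0
        exact ⟨l, hl, by rw [sub_self, norm_zero]; positivity⟩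
      · have hMne' : (mSet f g K x0 0 0).Nonempty := ⟨l0, hKKT⟩
        have hlt : infDist l (mSet f g K x0 0 0)
            < (κS + 1) * ‖((x, a, b) : X × X × Y) - (x0, 0, 0)‖ := by
          calc infDist l (mSet f g K x0 0 0) ≤ κS * ‖((a, b) : X × Y)‖ := hinf
            _ ≤ κS * ‖((x, a, b) : X × X × Y) - (x0, 0, 0)‖ :=
                mul_le_mul_of_nonneg_left habq hκS.le
            _ < (κS + 1) * ‖((x, a, b) : X × X × Y) - (x0, 0, 0)‖ := by nlinarith
        obtain ⟨l', hl', hdl'⟩ := (infDist_lt_iff hMne').mp hlt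
        exact ⟨l', hl', by rw [← dist_eq_norm]; exact hdl'.le⟩
  · -- the two properties imply strong calmness
    rintro ⟨⟨ε1, δ1, κ1, hε1, hδ1, hκ1, h1⟩, ⟨κ2, ε2, δ2, hκ2, hε2, hδ2, h2⟩⟩
    refine ⟨min δ1 (ε2 / (κ1 + 1)), min ε1 δ2, κ1 + κ2 * (κ1 + 1),
      lt_min hδ1 (by positivity), lt_min hε1 hδ2, by positivity, ?_⟩
    intro a b hab x l hxl hcl
    have habδ1 : ‖((a, b) : X × Y)‖ ≤ δ1 := le_trans hab (min_le_left _ _)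
    have habε2 : ‖((a, b) : X × Y)‖ ≤ ε2 / (κ1 + 1) := le_trans hab (min_le_right _ _)
    have hx : ‖x - x0‖ ≤ κ1 * ‖((a, b) : X × Y)‖ :=
      h1 a b habδ1 x l hxl (le_trans hcl (min_le_left _ _))
    have hqnorm : ‖((x, a, b) : X × X × Y) - (x0, 0, 0)‖
        = max ‖x - x0‖ ‖((a, b) : X × Y)‖ := by
      simp [Prod.norm_def]
    have habnn : (0 : ℝ) ≤ ‖((a, b) : X × Y)‖ := norm_nonneg _
    have hqle : ‖((x, a, b) : X × X × Y) - (x0, 0, 0)‖ ≤ ε2 := by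
      rw [hqnorm]
      refine max_le ?_ ?_
      · have hfrac : κ1 / (κ1 + 1) ≤ 1 := (div_le_one (by positivity)).mpr (by linarith)
        calc ‖x - x0‖ ≤ κ1 * ‖((a, b) : X × Y)‖ := hx
          _ ≤ κ1 * (ε2 / (κ1 + 1)) := mul_le_mul_of_nonneg_left habε2 hκ1.le
          _ = (κ1 / (κ1 + 1)) * ε2 := by ring
          _ ≤ ε2 := by nlinarith
      · exact le_trans habε2 (div_le_self hε2.le (by linarith))
    have hlδ2 : ‖l - l0‖ ≤ δ2 := by
      have : ‖l - l0‖ ≤ ‖((x, l) : X × Y) - (x0, l0)‖ := by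
        rw [Prod.norm_def]; exact le_max_right _ _
      exact le_trans this (le_trans hcl (min_le_right _ _))
    obtain ⟨l', hl', hll'⟩ := h2 (x, a, b) hqle l hxl hlδ2
    have hqbound : ‖((x, a, b) : X × X × Y) - (x0, 0, 0)‖
        ≤ (κ1 + 1) * ‖((a, b) : X × Y)‖ := by
      rw [hqnorm]
      exact max_le (by nlinarith) (by nlinarith)
    have hinf : infDist l (mSet f g K x0 0 0) ≤ ‖l - l'‖ := by
      rw [← dist_eq_norm]; exact infDist_le_dist_of_mem hl'
    calc ‖x - x0‖ + infDist l (mSet f g K x0 0 0)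
        ≤ κ1 * ‖((a, b) : X × Y)‖ + κ2 * ((κ1 + 1) * ‖((a, b) : X × Y)‖) := by
          have := le_trans hll' (mul_le_mul_of_nonneg_left hqbound hκ2.le)
          linarith [le_trans hinf this]
      _ = (κ1 + κ2 * (κ1 + 1)) * ‖((a, b) : X × Y)‖ := by ring

end
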